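/- With notation as in the paper: S*_d = n·∑_{c|n} ∑_{a|c} ∑_{b|c} (μ(c/a)μ(c/b)/φ(c))·(gcd(a,d)/lcm(a,d))·S_b, where S*_d is the number of conjugacy classes of K_d under its own action and S_b is the number of G-conjugacy classes contained in K_b. -/

import Mathlib

set_option linter.unusedSectionVars false
set_option linter.unusedVariables false
set_option linter.unreachableTactic false
set_option linter.unusedTactic false
open Finset ArithmeticFunction

lemma sum_mu_q (m : ℕ) (hm : m ≠ 0) :
    ∑ k ∈ m.divisors, ((moebius k : ℤ) : ℚ) = if m = 1 then 1 else 0 := by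
  have h := congrArg (fun f : ArithmeticFunction ℤ => f m) moebius_mul_coe_zeta
  simp only [mul_apply, one_apply] at h
  rw [Nat.sum_divisorsAntidiagonal (f := fun a b => moebius a * (zeta : ArithmeticFunction ℤ) b)] at h
  have h2 : ∑ k ∈ m.divisors, moebius k = if m = 1 then 1 else 0 := by
    rw [← h]
    apply Finset.sum_congr rfl
    intro k hk
    have hk' : m / k ≠ 0 := by
      obtain ⟨hk1, -⟩ := Nat.mem_divisors.mp hk
      have hkne : k ≠ 0 := by rintro rfl; exact hm (zero_dvd_iff.mp hk1)
      exact (Nat.div_pos (Nat.le_of_dvd (Nat.pos_of_ne_zero hm) hk1) (Nat.pos_of_ne_zero hkne)).ne'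
    simp [natCoe_apply, hk']
  calc ∑ k ∈ m.divisors, ((moebius k : ℤ) : ℚ) = ((∑ k ∈ m.divisors, moebius k : ℤ) : ℚ) := by
        push_cast; ring
    _ = _ := by rw [h2]; split <;> norm_num

lemma sum_divisors_mult (c u : ℕ) (hc : c ≠ 0) (hu : u ∣ c) (f : ℕ → ℚ) :
    ∑ b ∈ c.divisors, (if u ∣ b then f b else 0) = ∑ k ∈ (c / u).divisors, f (u * k) := by
  have hu0 : u ≠ 0 := by rintro rfl; exact hc (zero_dvd_iff.mp hu)
  have hcu0 : c / u ≠ 0 :=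
    (Nat.div_pos (Nat.le_of_dvd (Nat.pos_of_ne_zero hc) hu) (Nat.pos_of_ne_zero hu0)).ne'
  rw [← Finset.sum_filter]
  apply Finset.sum_nbij' (i := fun b => b / u) (j := fun k => u * k)
  · intro b hb
    simp only [Finset.mem_filter, Nat.mem_divisors] at hb
    obtain ⟨⟨hbc, -⟩, hub⟩ := hb
    obtain ⟨x, rfl⟩ := hub
    rw [Nat.mul_div_cancel_left x (Nat.pos_of_ne_zero hu0)]
    exact Nat.mem_divisors.mpr ⟨(Nat.dvd_div_iff_mul_dvd hu).mpr hbc, hcu0⟩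
  · intro k hk
    simp only [Nat.mem_divisors] at hk
    simp only [Finset.mem_filter, Nat.mem_divisors]
    exact ⟨⟨(Nat.dvd_div_iff_mul_dvd hu).mp hk.1, hc⟩, dvd_mul_right u k⟩
  · intro b hb
    simp only [Finset.mem_filter] at hb
    exact Nat.mul_div_cancel' hb.2
  · intro k hk
    exact Nat.mul_div_cancel_left k (Nat.pos_of_ne_zero hu0)
  · intro b hb
    simp only [Finset.mem_filter] at hb
    rw [Nat.mul_div_cancel' hb.2]

lemma aux1 (c u : ℕ) (hc : c ≠ 0) :
    ∑ b ∈ c.divisors, (if u ∣ b then ((moebius (c / b) : ℤ) : ℚ) else 0)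
      = if u = c then 1 else 0 := by
  by_cases hu : u ∣ c
  · have hu0 : u ≠ 0 := by rintro rfl; exact hc (zero_dvd_iff.mp hu)
    have hcu0 : c / u ≠ 0 :=
      (Nat.div_pos (Nat.le_of_dvd (Nat.pos_of_ne_zero hc) hu) (Nat.pos_of_ne_zero hu0)).ne'
    rw [sum_divisors_mult c u hc hu]
    have h1 : ∀ k ∈ (c / u).divisors, ((moebius (c / (u * k)) : ℤ) : ℚ)
        = ((moebius ((c / u) / k) : ℤ) : ℚ) := by
      intro k hk; rw [Nat.div_div_eq_div_mul]
    rw [Finset.sum_congr rfl h1, Nat.sum_div_divisors (f := fun k => ((moebius k : ℤ) : ℚ)),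
      sum_mu_q _ hcu0]
    have hiff : c / u = 1 ↔ u = c := by
      obtain ⟨x, rfl⟩ := hu
      rw [Nat.mul_div_cancel_left x (Nat.pos_of_ne_zero hu0)]
      constructor
      · rintro rfl; ring
      · intro h
        have : u * 1 = u * x := by simpa using h
        exact (Nat.eq_of_mul_eq_mul_left (Nat.pos_of_ne_zero hu0) this).symm
    simp only [hiff]
  · rw [if_neg (by rintro rfl; exact hu dvd_rfl)]
    apply Finset.sum_eq_zero
    intro b hb
    rw [if_neg]
    intro hub
    exact hu (hub.trans (Nat.mem_divisors.mp hb).1)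

lemma aux1b (e u : ℕ) (he : e ≠ 0) :
    ∑ c ∈ e.divisors, (if u ∣ c then ((moebius (c / u) : ℤ) : ℚ) else 0)
      = if u = e then 1 else 0 := by
  by_cases hu : u ∣ e
  · have hu0 : u ≠ 0 := by rintro rfl; exact he (zero_dvd_iff.mp hu)
    have heu0 : e / u ≠ 0 :=
      (Nat.div_pos (Nat.le_of_dvd (Nat.pos_of_ne_zero he) hu) (Nat.pos_of_ne_zero hu0)).ne'
    rw [sum_divisors_mult e u he hu]
    have h1 : ∀ k ∈ (e / u).divisors, ((moebius (u * k / u) : ℤ) : ℚ)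
        = ((moebius k : ℤ) : ℚ) := by
      intro k hk; rw [Nat.mul_div_cancel_left k (Nat.pos_of_ne_zero hu0)]
    rw [Finset.sum_congr rfl h1, sum_mu_q _ heu0]
    have hiff : e / u = 1 ↔ u = e := by
      obtain ⟨x, rfl⟩ := hu
      rw [Nat.mul_div_cancel_left x (Nat.pos_of_ne_zero hu0)]
      constructor
      · rintro rfl; ring
      · intro h
        have : u * 1 = u * x := by simpa using h
        exact (Nat.eq_of_mul_eq_mul_left (Nat.pos_of_ne_zero hu0) this).symm
    simp only [hiff]
  · rw [if_neg (by rintro rfl; exact hu dvd_rfl)]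
    apply Finset.sum_eq_zero
    intro b hb
    rw [if_neg]
    intro hub
    exact hu (hub.trans (Nat.mem_divisors.mp hb).1)

open Finset ArithmeticFunction

-- A4: restrict a divisor-sum of n by a divisibility condition to divisors of l
lemma sum_divisors_restrict (n l : ℕ) (hn : n ≠ 0) (hl : l ∣ n) (f : ℕ → ℚ) :
    ∑ e ∈ n.divisors, (if e ∣ l then f e else 0) = ∑ e ∈ l.divisors, f e := by
  have hl0 : l ≠ 0 := by rintro rfl; exact hn (zero_dvd_iff.mp hl)
  rw [← Finset.sum_filter]
  apply Finset.sum_congr _ (fun _ _ => rfl)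
  ext e
  simp only [Finset.mem_filter, Nat.mem_divisors]
  constructor
  · rintro ⟨⟨-, -⟩, h⟩; exact ⟨h, hl0⟩
  · rintro ⟨h, -⟩; exact ⟨⟨h.trans hl, hn⟩, h⟩

-- A5
lemma div_dvd_symm {n e g : ℕ} (hn : n ≠ 0) (he : e ∣ n) (hg : g ∣ n) :
    n / g ∣ e ↔ n / e ∣ g := by
  have hg0 : g ≠ 0 := by rintro rfl; exact hn (zero_dvd_iff.mp hg)
  have he0 : e ≠ 0 := by rintro rfl; exact hn (zero_dvd_iff.mp he)
  have key : ∀ a b : ℕ, a ∣ n → b ∣ n → a ≠ 0 → (n / a ∣ b ↔ n ∣ a * b) := by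
    intro a b ha hb ha0
    constructor
    · intro h
      obtain ⟨x, hx⟩ := h
      have : n = a * (n / a) := (Nat.mul_div_cancel' ha).symm
      rw [this, hx] at *
      exact ⟨x, by ring⟩
    · intro h
      have h2 : a * (n / a) ∣ a * b := by
        rw [Nat.mul_div_cancel' ha]; exact h
      exact (mul_dvd_mul_iff_left ha0).mp h2
  rw [key g e hg he hg0, key e g he hg he0, mul_comm]

-- A6
lemma lcm_div_div {n d e : ℕ} (hn : n ≠ 0) (hd : d ∣ n) (he : e ∣ n) :
    Nat.lcm (n / d) (n / e) = n / Nat.gcd d e := by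
  have hd0 : d ≠ 0 := by rintro rfl; exact hn (zero_dvd_iff.mp hd)
  have he0 : e ≠ 0 := by rintro rfl; exact hn (zero_dvd_iff.mp he)
  have hgd : Nat.gcd d e ∣ n := (Nat.gcd_dvd_left d e).trans hd
  have hlcm : Nat.lcm (n / d) (n / e) ∣ n :=
    Nat.lcm_dvd (Nat.div_dvd_of_dvd hd) (Nat.div_dvd_of_dvd he)
  apply Nat.dvd_antisymm
  · apply Nat.lcm_dvd
    · rw [div_dvd_symm hn (Nat.div_dvd_of_dvd hgd) hd, Nat.div_div_self hgd hn]
      exact Nat.gcd_dvd_left d e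
    · rw [div_dvd_symm hn (Nat.div_dvd_of_dvd hgd) he, Nat.div_div_self hgd hn]
      exact Nat.gcd_dvd_right d e
  · rw [div_dvd_symm hn hlcm hgd]
    apply Nat.dvd_gcd
    · rw [div_dvd_symm hn hd hlcm]
      exact Nat.dvd_lcm_left _ _
    · rw [div_dvd_symm hn he hlcm]
      exact Nat.dvd_lcm_right _ _

-- count of multiples
lemma card_multiples_range (n m : ℕ) (hn : n ≠ 0) (hm : m ∣ n) :
    ((Finset.range n).filter (fun i => m ∣ i)).card = n / m := by
  have hm0 : m ≠ 0 := by rintro rfl; exact hn (zero_dvd_iff.mp hm)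
  have himg : (Finset.range n).filter (fun i => m ∣ i)
      = (Finset.range (n / m)).image (fun k => m * k) := by
    ext i
    simp only [Finset.mem_filter, Finset.mem_range, Finset.mem_image]
    constructor
    · rintro ⟨hin, x, rfl⟩
      refine ⟨x, ?_, rfl⟩
      have hin' : m * x < m * (n / m) := by rwa [Nat.mul_div_cancel' hm]
      exact Nat.lt_of_mul_lt_mul_left hin'
    · rintro ⟨k, hk, rfl⟩
      constructor
      · calc m * k < m * (n / m) :=
              mul_lt_mul_of_pos_left hk (Nat.pos_of_ne_zero hm0)
          _ = n := Nat.mul_div_cancel' hm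
      · exact ⟨k, rfl⟩
  rw [himg, Finset.card_image_of_injective _ (fun a b h => by
    exact Nat.eq_of_mul_eq_mul_left (Nat.pos_of_ne_zero hm0) h), Finset.card_range]

-- count with gcd condition = totient
lemma card_gcd_range (n m : ℕ) (hn : n ≠ 0) (hm : m ∣ n) :
    ((Finset.range n).filter (fun i => Nat.gcd n i = m)).card = Nat.totient (n / m) := by
  have hm0 : m ≠ 0 := by rintro rfl; exact hn (zero_dvd_iff.mp hm)
  have himg : (Finset.range n).filter (fun i => Nat.gcd n i = m)
      = ((Finset.range (n / m)).filter (fun k => Nat.Coprime (n / m) k)).image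
          (fun k => m * k) := by
    ext i
    simp only [Finset.mem_filter, Finset.mem_range, Finset.mem_image]
    constructor
    · rintro ⟨hin, hgcd⟩
      have hmi : m ∣ i := hgcd ▸ Nat.gcd_dvd_right n i
      obtain ⟨k, rfl⟩ := hmi
      refine ⟨k, ⟨?_, ?_⟩, rfl⟩
      · calc k = m * k / m := (Nat.mul_div_cancel_left k (Nat.pos_of_ne_zero hm0)).symm
          _ < n / m := by
            have hin' : m * k < m * (n / m) := by rwa [Nat.mul_div_cancel' hm]
            rw [Nat.mul_div_cancel_left k (Nat.pos_of_ne_zero hm0)]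
            exact Nat.lt_of_mul_lt_mul_left hin'
      · have : Nat.gcd (m * (n / m)) (m * k) = m := by
          rw [Nat.mul_div_cancel' hm]; exact hgcd
        rw [Nat.gcd_mul_left] at this
        have := Nat.eq_of_mul_eq_mul_left (Nat.pos_of_ne_zero hm0)
          (this.trans (mul_one m).symm)
        exact this
    · rintro ⟨k, ⟨hk, hcop⟩, rfl⟩
      constructor
      · calc m * k < m * (n / m) :=
              mul_lt_mul_of_pos_left hk (Nat.pos_of_ne_zero hm0)
          _ = n := Nat.mul_div_cancel' hm
      · conv_lhs => rw [← Nat.mul_div_cancel' hm]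
        rw [Nat.gcd_mul_left, hcop, mul_one]
  rw [himg, Finset.card_image_of_injective _ (fun a b h => by
    exact Nat.eq_of_mul_eq_mul_left (Nat.pos_of_ne_zero hm0) h)]
  rfl

open Finset ArithmeticFunction

section
variable (n : ℕ) (ρ : ℕ → ℚ)

/-- inverse transform over the divisor lattice of `n` -/
noncomputable def sig (e : ℕ) : ℚ :=
  ∑ l ∈ n.divisors, if e ∣ l then ((moebius (l / e) : ℤ) : ℚ) * ρ l else 0

end

lemma sig_inv (n : ℕ) (hn : n ≠ 0) (ρ : ℕ → ℚ) (l : ℕ) (hl : l ∣ n) :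
    ∑ e ∈ n.divisors, (if l ∣ e then sig n ρ e else 0) = ρ l := by
  have step : ∀ e ∈ n.divisors, (if l ∣ e then sig n ρ e else 0)
      = ∑ l' ∈ n.divisors,
          (if l' ∣ n ∧ e ∣ l' ∧ l ∣ e then ((moebius (l' / e) : ℤ) : ℚ) * ρ l' else 0) := by
    intro e _
    unfold sig
    split
    · rename_i hle
      apply Finset.sum_congr rfl
      intro l' hl'
      have h1 : l' ∣ n := (Nat.mem_divisors.mp hl').1
      by_cases h : e ∣ l' <;> simp [h, h1, hle]
    · rename_i hle
      rw [eq_comm]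
      apply Finset.sum_eq_zero
      intro l' _
      rw [if_neg (by tauto)]
  rw [Finset.sum_congr rfl step, Finset.sum_comm]
  have inner : ∀ l' ∈ n.divisors,
      (∑ e ∈ n.divisors,
        if l' ∣ n ∧ e ∣ l' ∧ l ∣ e then ((moebius (l' / e) : ℤ) : ℚ) * ρ l' else 0)
      = (if l = l' then 1 else 0) * ρ l' := by
    intro l' hl'
    obtain ⟨h1, h2⟩ := Nat.mem_divisors.mp hl'
    have hl'0 : l' ≠ 0 := by rintro rfl; exact h2 (zero_dvd_iff.mp h1)
    have e1 : ∀ e ∈ n.divisors,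
        (if l' ∣ n ∧ e ∣ l' ∧ l ∣ e then ((moebius (l' / e) : ℤ) : ℚ) * ρ l' else 0)
        = (if e ∣ l' then (if l ∣ e then ((moebius (l' / e) : ℤ) : ℚ) else 0) * ρ l' else 0) := by
      intro e _
      by_cases hA : e ∣ l' <;> by_cases hB : l ∣ e <;> simp [hA, hB, h1]
    rw [Finset.sum_congr rfl e1, sum_divisors_restrict n l' hn h1, ← Finset.sum_mul,
      aux1 l' l hl'0]
  rw [Finset.sum_congr rfl inner]
  have : ∀ l' ∈ n.divisors, (if l = l' then 1 else 0) * ρ l'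
      = if l' = l then ρ l' else 0 := by
    intro l' _
    by_cases h : l = l' <;> simp [h, eq_comm (a := l') (b := l), h]
  rw [Finset.sum_congr rfl this, Finset.sum_ite_eq' n.divisors l ρ,
    if_pos (Nat.mem_divisors.mpr ⟨hl, hn⟩)]

lemma rho_expand (n : ℕ) (hn : n ≠ 0) (ρ : ℕ → ℚ) (i j : ℕ) :
    ρ (n / Nat.gcd n (Nat.gcd i j))
      = ∑ e ∈ n.divisors, (if n / e ∣ i ∧ n / e ∣ j then sig n ρ e else 0) := by
  set g := Nat.gcd n (Nat.gcd i j) with hgdef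
  have hg : g ∣ n := Nat.gcd_dvd_left _ _
  have hgn : n / g ∣ n := Nat.div_dvd_of_dvd hg
  rw [← sig_inv n hn ρ (n / g) hgn]
  apply Finset.sum_congr rfl
  intro e he
  have he' : e ∣ n := (Nat.mem_divisors.mp he).1
  have hiff : (n / e ∣ i ∧ n / e ∣ j) ↔ (n / g ∣ e) := by
    rw [div_dvd_symm hn he' hg]
    constructor
    · rintro ⟨hi, hj⟩
      exact Nat.dvd_gcd (Nat.div_dvd_of_dvd he') (Nat.dvd_gcd hi hj)
    · intro h
      have h2 := h.trans (Nat.gcd_dvd_right n (Nat.gcd i j))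
      exact ⟨h2.trans (Nat.gcd_dvd_left i j), h2.trans (Nat.gcd_dvd_right i j)⟩
  exact if_congr hiff.symm rfl rfl

lemma indicator_count (n u e : ℕ) (hn : n ≠ 0) (hu : u ∣ n) (he : e ∣ n) :
    ∑ i ∈ Finset.range n, (if n / u ∣ i ∧ n / e ∣ i then (1 : ℚ) else 0)
      = (Nat.gcd u e : ℚ) := by
  have hge : Nat.gcd u e ∣ n := (Nat.gcd_dvd_left u e).trans hu
  have h1 : ∀ i, (n / u ∣ i ∧ n / e ∣ i) ↔ (n / Nat.gcd u e ∣ i) := by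
    intro i
    rw [← lcm_div_div hn hu he, Nat.lcm_dvd_iff]
  simp only [h1]
  rw [Finset.sum_boole, card_multiples_range n _ hn (Nat.div_dvd_of_dvd hge),
    Nat.div_div_self hge hn]

lemma indicator_count_one (n e : ℕ) (hn : n ≠ 0) (he : e ∣ n) :
    ∑ j ∈ Finset.range n, (if n / e ∣ j then (1 : ℚ) else 0) = (e : ℚ) := by
  rw [Finset.sum_boole, card_multiples_range n _ hn (Nat.div_dvd_of_dvd he),
    Nat.div_div_self he hn]

lemma indicator_count2 (n c e : ℕ) (hn : n ≠ 0) (hc : c ∣ n) (he : e ∣ n) :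
    ∑ i ∈ Finset.range n, (if n / Nat.gcd n i = c ∧ n / e ∣ i then (1 : ℚ) else 0)
      = if c ∣ e then (Nat.totient c : ℚ) else 0 := by
  by_cases hce : c ∣ e
  · have key : ∀ i, (n / Nat.gcd n i = c ∧ n / e ∣ i) ↔ (Nat.gcd n i = n / c) := by
      intro i
      constructor
      · rintro ⟨h1, -⟩
        rw [← h1, Nat.div_div_self (Nat.gcd_dvd_left n i) hn]
      · intro h2
        refine ⟨by rw [h2, Nat.div_div_self hc hn], ?_⟩
        have h3 : n / e ∣ n / c := by
          rw [div_dvd_symm hn (Nat.div_dvd_of_dvd hc) he, Nat.div_div_self hc hn]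
          exact hce
        exact h3.trans (h2 ▸ Nat.gcd_dvd_right n i)
    simp only [key]
    rw [Finset.sum_boole, card_gcd_range n (n / c) hn (Nat.div_dvd_of_dvd hc),
      Nat.div_div_self hc hn, if_pos hce]
  · rw [if_neg hce]
    apply Finset.sum_eq_zero
    intro i _
    rw [if_neg]
    rintro ⟨h1, h2⟩
    apply hce
    have h3 : n / e ∣ Nat.gcd n i := Nat.dvd_gcd (Nat.div_dvd_of_dvd he) h2
    have h4 : Nat.gcd n i = n / c := by
      rw [← h1, Nat.div_div_self (Nat.gcd_dvd_left n i) hn]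
    rw [h4, div_dvd_symm hn (Nat.div_dvd_of_dvd hc) he, Nat.div_div_self hc hn] at h3
    exact h3

open Finset ArithmeticFunction


lemma expand2 (n : ℕ) (hn : n ≠ 0) (ρ : ℕ → ℚ) (C1 C2 : ℕ → Prop)
    [DecidablePred C1] [DecidablePred C2] :
    ∑ i ∈ Finset.range n, ∑ j ∈ Finset.range n,
        (if C1 i ∧ C2 j then ρ (n / Nat.gcd n (Nat.gcd i j)) else 0)
      = ∑ e ∈ n.divisors,
          (∑ i ∈ Finset.range n, (if C1 i ∧ n / e ∣ i then (1:ℚ) else 0)) *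
            ((∑ j ∈ Finset.range n, (if C2 j ∧ n / e ∣ j then (1:ℚ) else 0)) * sig n ρ e) := by
  have step1 : ∀ i ∈ Finset.range n, ∀ j ∈ Finset.range n,
      (if C1 i ∧ C2 j then ρ (n / Nat.gcd n (Nat.gcd i j)) else 0)
      = ∑ e ∈ n.divisors,
          ((if C1 i ∧ n / e ∣ i then (1:ℚ) else 0) *
            ((if C2 j ∧ n / e ∣ j then (1:ℚ) else 0) * sig n ρ e)) := by
    intro i _ j _
    rw [rho_expand n hn ρ i j]
    by_cases h1 : C1 i <;> by_cases h2 : C2 j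
    · rw [if_pos ⟨h1, h2⟩]
      apply Finset.sum_congr rfl
      intro e _
      by_cases h3 : n / e ∣ i <;> by_cases h4 : n / e ∣ j <;> simp [h1, h2, h3, h4]
    all_goals
      rw [if_neg (by tauto), eq_comm]
      apply Finset.sum_eq_zero
      intro e _
      by_cases h3 : n / e ∣ i <;> by_cases h4 : n / e ∣ j <;> simp [h1, h2, h3, h4]
  calc ∑ i ∈ Finset.range n, ∑ j ∈ Finset.range n,
        (if C1 i ∧ C2 j then ρ (n / Nat.gcd n (Nat.gcd i j)) else 0)
      = ∑ i ∈ Finset.range n, ∑ j ∈ Finset.range n, ∑ e ∈ n.divisors,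
          ((if C1 i ∧ n / e ∣ i then (1:ℚ) else 0) *
            ((if C2 j ∧ n / e ∣ j then (1:ℚ) else 0) * sig n ρ e)) := by
        apply Finset.sum_congr rfl; intro i hi
        exact Finset.sum_congr rfl (fun j hj => step1 i hi j hj)
    _ = ∑ e ∈ n.divisors, ∑ i ∈ Finset.range n, ∑ j ∈ Finset.range n,
          ((if C1 i ∧ n / e ∣ i then (1:ℚ) else 0) *
            ((if C2 j ∧ n / e ∣ j then (1:ℚ) else 0) * sig n ρ e)) := by
        have h1 : ∀ i ∈ Finset.range n,
            (∑ j ∈ Finset.range n, ∑ e ∈ n.divisors,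
              ((if C1 i ∧ n / e ∣ i then (1:ℚ) else 0) *
                ((if C2 j ∧ n / e ∣ j then (1:ℚ) else 0) * sig n ρ e)))
            = ∑ e ∈ n.divisors, ∑ j ∈ Finset.range n,
              ((if C1 i ∧ n / e ∣ i then (1:ℚ) else 0) *
                ((if C2 j ∧ n / e ∣ j then (1:ℚ) else 0) * sig n ρ e)) :=
          fun i _ => Finset.sum_comm
        rw [Finset.sum_congr rfl h1, Finset.sum_comm]
    _ = _ := by
        apply Finset.sum_congr rfl
        intro e _
        rw [Finset.sum_mul]
        apply Finset.sum_congr rfl; intro i _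
        rw [← Finset.mul_sum, ← Finset.sum_mul]

lemma double_sum (n u v : ℕ) (hn : n ≠ 0) (hu : u ∣ n) (hv : v ∣ n) (ρ : ℕ → ℚ) :
    ∑ i ∈ Finset.range n, ∑ j ∈ Finset.range n,
        (if n / u ∣ i ∧ n / v ∣ j then ρ (n / Nat.gcd n (Nat.gcd i j)) else 0)
      = ∑ e ∈ n.divisors, sig n ρ e * Nat.gcd u e * Nat.gcd v e := by
  rw [expand2 n hn ρ _ _]
  apply Finset.sum_congr rfl
  intro e he
  have he' : e ∣ n := (Nat.mem_divisors.mp he).1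
  rw [indicator_count n u e hn hu he', indicator_count n v e hn hv he']
  ring

lemma b_collapse (n c : ℕ) (hn : n ≠ 0) (hc : c ∣ n) (hc0 : c ≠ 0) (ρ : ℕ → ℚ) :
    ∑ b ∈ c.divisors, ((moebius (c / b) : ℤ) : ℚ) *
        ((1 / (n : ℚ)) * ∑ i ∈ Finset.range n, ∑ j ∈ Finset.range n,
          (if n / b ∣ i then ρ (n / Nat.gcd n (Nat.gcd i j)) else 0))
      = (1 / (n : ℚ)) * (Nat.totient c : ℚ) *
          ∑ e ∈ n.divisors, (if c ∣ e then (e : ℚ) * sig n ρ e else 0) := by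
  have key : ∑ b ∈ c.divisors, ((moebius (c / b) : ℤ) : ℚ) *
        (∑ i ∈ Finset.range n, ∑ j ∈ Finset.range n,
          (if n / b ∣ i then ρ (n / Nat.gcd n (Nat.gcd i j)) else 0))
      = (Nat.totient c : ℚ) *
          ∑ e ∈ n.divisors, (if c ∣ e then (e : ℚ) * sig n ρ e else 0) := by
    -- swap the b-sum inside
    calc ∑ b ∈ c.divisors, ((moebius (c / b) : ℤ) : ℚ) *
          (∑ i ∈ Finset.range n, ∑ j ∈ Finset.range n,
            (if n / b ∣ i then ρ (n / Nat.gcd n (Nat.gcd i j)) else 0))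
        = ∑ i ∈ Finset.range n, ∑ j ∈ Finset.range n, ∑ b ∈ c.divisors,
            ((moebius (c / b) : ℤ) : ℚ) *
              (if n / b ∣ i then ρ (n / Nat.gcd n (Nat.gcd i j)) else 0) := by
          have s1 : ∀ b ∈ c.divisors, ((moebius (c / b) : ℤ) : ℚ) *
              (∑ i ∈ Finset.range n, ∑ j ∈ Finset.range n,
                (if n / b ∣ i then ρ (n / Nat.gcd n (Nat.gcd i j)) else 0))
              = ∑ i ∈ Finset.range n, ∑ j ∈ Finset.range n,
                ((moebius (c / b) : ℤ) : ℚ) *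
                  (if n / b ∣ i then ρ (n / Nat.gcd n (Nat.gcd i j)) else 0) := by
            intro b _
            rw [Finset.mul_sum]
            apply Finset.sum_congr rfl; intro i _
            rw [Finset.mul_sum]
          rw [Finset.sum_congr rfl s1, Finset.sum_comm]
          apply Finset.sum_congr rfl; intro i _
          rw [Finset.sum_comm]
      _ = ∑ i ∈ Finset.range n, ∑ j ∈ Finset.range n,
            ((if n / Nat.gcd n i = c ∧ True then ρ (n / Nat.gcd n (Nat.gcd i j)) else 0)) := by
          apply Finset.sum_congr rfl; intro i _
          apply Finset.sum_congr rfl; intro j _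
          have hcond : ∀ b ∈ c.divisors, ((moebius (c / b) : ℤ) : ℚ) *
              (if n / b ∣ i then ρ (n / Nat.gcd n (Nat.gcd i j)) else 0)
              = (if n / Nat.gcd n i ∣ b then ((moebius (c / b) : ℤ) : ℚ) else 0) *
                  ρ (n / Nat.gcd n (Nat.gcd i j)) := by
            intro b hb
            have hbc : b ∣ c := (Nat.mem_divisors.mp hb).1
            have hbn : b ∣ n := hbc.trans hc
            have hiff : (n / b ∣ i) ↔ (n / Nat.gcd n i ∣ b) := by
              rw [div_dvd_symm hn hbn (Nat.gcd_dvd_left n i)]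
              constructor
              · intro h; exact Nat.dvd_gcd (Nat.div_dvd_of_dvd hbn) h
              · intro h; exact h.trans (Nat.gcd_dvd_right n i)
            by_cases h : n / b ∣ i
            · rw [if_pos h, if_pos (hiff.mp h)]
            · rw [if_neg h, if_neg (fun hh => h (hiff.mpr hh))]; ring
          rw [Finset.sum_congr rfl hcond, ← Finset.sum_mul, aux1 c (n / Nat.gcd n i) hc0]
          by_cases h : n / Nat.gcd n i = c <;> simp [h]
      _ = ∑ e ∈ n.divisors,
            (∑ i ∈ Finset.range n, (if n / Nat.gcd n i = c ∧ n / e ∣ i then (1:ℚ) else 0)) *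
              ((∑ j ∈ Finset.range n, (if True ∧ n / e ∣ j then (1:ℚ) else 0)) * sig n ρ e) :=
          expand2 n hn ρ (fun i => n / Nat.gcd n i = c) (fun _ => True)
      _ = (Nat.totient c : ℚ) *
            ∑ e ∈ n.divisors, (if c ∣ e then (e : ℚ) * sig n ρ e else 0) := by
          rw [Finset.mul_sum]
          apply Finset.sum_congr rfl
          intro e he
          have he' : e ∣ n := (Nat.mem_divisors.mp he).1
          rw [indicator_count2 n c e hn hc he']
          have hj : ∑ j ∈ Finset.range n, (if True ∧ n / e ∣ j then (1:ℚ) else 0)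
              = (e : ℚ) := by
            rw [← indicator_count_one n e hn he']
            apply Finset.sum_congr rfl; intro j _
            simp
          rw [hj]
          by_cases h : c ∣ e <;> simp [h] <;> ring
  calc ∑ b ∈ c.divisors, ((moebius (c / b) : ℤ) : ℚ) *
        ((1 / (n : ℚ)) * ∑ i ∈ Finset.range n, ∑ j ∈ Finset.range n,
          (if n / b ∣ i then ρ (n / Nat.gcd n (Nat.gcd i j)) else 0))
      = (1 / (n : ℚ)) * ∑ b ∈ c.divisors, ((moebius (c / b) : ℤ) : ℚ) *
          (∑ i ∈ Finset.range n, ∑ j ∈ Finset.range n,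
            (if n / b ∣ i then ρ (n / Nat.gcd n (Nat.gcd i j)) else 0)) := by
        rw [Finset.mul_sum]
        apply Finset.sum_congr rfl; intro b _
        ring
    _ = _ := by rw [key]; ring

open Finset ArithmeticFunction


lemma moebius_h (e : ℕ) (he : e ≠ 0) (h : ℕ → ℚ) :
    ∑ c ∈ e.divisors, ∑ a ∈ c.divisors, ((moebius (c / a) : ℤ) : ℚ) * h a = h e := by
  have r1 : ∀ c ∈ e.divisors, ∑ a ∈ c.divisors, ((moebius (c / a) : ℤ) : ℚ) * h a
      = ∑ a ∈ e.divisors, (if a ∣ c then ((moebius (c / a) : ℤ) : ℚ) * h a else 0) := by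
    intro c hc
    exact (sum_divisors_restrict e c he (Nat.mem_divisors.mp hc).1 _).symm
  rw [Finset.sum_congr rfl r1, Finset.sum_comm]
  have r2 : ∀ a ∈ e.divisors,
      (∑ c ∈ e.divisors, if a ∣ c then ((moebius (c / a) : ℤ) : ℚ) * h a else 0)
      = (if a = e then 1 else 0) * h a := by
    intro a _
    have : ∀ c ∈ e.divisors, (if a ∣ c then ((moebius (c / a) : ℤ) : ℚ) * h a else 0)
        = (if a ∣ c then ((moebius (c / a) : ℤ) : ℚ) else 0) * h a := by
      intro c _; split <;> simp
    rw [Finset.sum_congr rfl this, ← Finset.sum_mul, aux1b e a he]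
  rw [Finset.sum_congr rfl r2]
  have r3 : ∀ a ∈ e.divisors, (if a = e then 1 else 0) * h a
      = if a = e then h a else 0 := by
    intro a _; split <;> simp
  rw [Finset.sum_congr rfl r3, Finset.sum_ite_eq' e.divisors e h,
    if_pos (Nat.mem_divisors.mpr ⟨dvd_rfl, he⟩)]

lemma AR (n d : ℕ) (hn : n ≠ 0) (hd : d ∣ n) (ρ : ℕ → ℚ) :
    (1 / (d : ℚ)) * (∑ i ∈ Finset.range n, ∑ j ∈ Finset.range n,
        (if n / d ∣ i ∧ n / d ∣ j then ρ (n / Nat.gcd n (Nat.gcd i j)) else 0))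
    = (n : ℚ) * ∑ c ∈ n.divisors, ∑ a ∈ c.divisors, ∑ b ∈ c.divisors,
        (((moebius (c / a) : ℤ) : ℚ) * ((moebius (c / b) : ℤ) : ℚ) / (Nat.totient c : ℚ)) *
          ((Nat.gcd a d : ℚ) / (Nat.lcm a d : ℚ)) *
          ((1 / (n : ℚ)) * ∑ i ∈ Finset.range n, ∑ j ∈ Finset.range n,
            (if n / b ∣ i then ρ (n / Nat.gcd n (Nat.gcd i j)) else 0)) := by
  have hd0 : d ≠ 0 := by rintro rfl; exact hn (zero_dvd_iff.mp hd)
  have hn' : (n : ℚ) ≠ 0 := Nat.cast_ne_zero.mpr hn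
  -- abbreviations
  set h : ℕ → ℚ := fun a => (Nat.gcd a d : ℚ) / (Nat.lcm a d : ℚ) with hh
  set E : ℕ → ℚ := fun c => ∑ e ∈ n.divisors, (if c ∣ e then (e : ℚ) * sig n ρ e else 0)
    with hE
  set A : ℕ → ℚ := fun c => ∑ a ∈ c.divisors, ((moebius (c / a) : ℤ) : ℚ) * h a with hA
  -- RHS transformation
  have hrhs : ∀ c ∈ n.divisors,
      (∑ a ∈ c.divisors, ∑ b ∈ c.divisors,
        (((moebius (c / a) : ℤ) : ℚ) * ((moebius (c / b) : ℤ) : ℚ) / (Nat.totient c : ℚ)) *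
          ((Nat.gcd a d : ℚ) / (Nat.lcm a d : ℚ)) *
          ((1 / (n : ℚ)) * ∑ i ∈ Finset.range n, ∑ j ∈ Finset.range n,
            (if n / b ∣ i then ρ (n / Nat.gcd n (Nat.gcd i j)) else 0)))
      = (1 / (n : ℚ)) * (A c * E c) := by
    intro c hc
    obtain ⟨hcn, -⟩ := Nat.mem_divisors.mp hc
    have hc0 : c ≠ 0 := by rintro rfl; exact hn (zero_dvd_iff.mp hcn)
    have hφ : (Nat.totient c : ℚ) ≠ 0 :=
      Nat.cast_ne_zero.mpr (Nat.totient_pos.mpr (Nat.pos_of_ne_zero hc0)).ne'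
    have step : ∀ a ∈ c.divisors,
        (∑ b ∈ c.divisors,
          (((moebius (c / a) : ℤ) : ℚ) * ((moebius (c / b) : ℤ) : ℚ) / (Nat.totient c : ℚ)) *
            ((Nat.gcd a d : ℚ) / (Nat.lcm a d : ℚ)) *
            ((1 / (n : ℚ)) * ∑ i ∈ Finset.range n, ∑ j ∈ Finset.range n,
              (if n / b ∣ i then ρ (n / Nat.gcd n (Nat.gcd i j)) else 0)))
        = (((moebius (c / a) : ℤ) : ℚ) * h a) * ((1 / (Nat.totient c : ℚ)) *
            (∑ b ∈ c.divisors, ((moebius (c / b) : ℤ) : ℚ) *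
              ((1 / (n : ℚ)) * ∑ i ∈ Finset.range n, ∑ j ∈ Finset.range n,
                (if n / b ∣ i then ρ (n / Nat.gcd n (Nat.gcd i j)) else 0)))) := by
      intro a _
      rw [Finset.mul_sum, Finset.mul_sum]
      apply Finset.sum_congr rfl; intro b _
      rw [hh]; ring
    rw [Finset.sum_congr rfl step, ← Finset.sum_mul, b_collapse n c hn hcn hc0 ρ]
    simp only [hA, hE]
    field_simp
  rw [Finset.sum_congr rfl hrhs, ← Finset.mul_sum]
  have hn_cancel : (n : ℚ) * ((1 / (n : ℚ)) * ∑ c ∈ n.divisors, A c * E c)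
      = ∑ c ∈ n.divisors, A c * E c := by field_simp
  rw [hn_cancel]
  -- now compute ∑_c A c * E c
  have swapped : ∑ c ∈ n.divisors, A c * E c
      = ∑ e ∈ n.divisors, ((e : ℚ) * sig n ρ e) * h e := by
    have s1 : ∀ c ∈ n.divisors, A c * E c
        = ∑ e ∈ n.divisors, (if c ∣ e then A c * ((e : ℚ) * sig n ρ e) else 0) := by
      intro c _
      rw [hE, Finset.mul_sum]
      apply Finset.sum_congr rfl; intro e _
      split <;> simp
    rw [Finset.sum_congr rfl s1, Finset.sum_comm]
    apply Finset.sum_congr rfl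
    intro e he
    obtain ⟨hen, -⟩ := Nat.mem_divisors.mp he
    have he0 : e ≠ 0 := by rintro rfl; exact hn (zero_dvd_iff.mp hen)
    have s2 : ∀ c ∈ n.divisors, (if c ∣ e then A c * ((e : ℚ) * sig n ρ e) else 0)
        = (if c ∣ e then A c else 0) * ((e : ℚ) * sig n ρ e) := by
      intro c _; split <;> simp
    rw [Finset.sum_congr rfl s2, ← Finset.sum_mul,
      sum_divisors_restrict n e hn hen A, hA]
    rw [show ∑ c ∈ e.divisors, ∑ a ∈ c.divisors, ((moebius (c / a) : ℤ) : ℚ) * h a = h e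
      from moebius_h e he0 h]
    ring
  rw [swapped, double_sum n d d hn hd hd ρ, Finset.mul_sum]
  apply Finset.sum_congr rfl
  intro e he
  obtain ⟨hen, -⟩ := Nat.mem_divisors.mp he
  have he0 : (e : ℚ) ≠ 0 := Nat.cast_ne_zero.mpr (by rintro rfl; exact hn (zero_dvd_iff.mp hen))
  have hl0 : (Nat.lcm e d : ℚ) ≠ 0 := by
    rw [Nat.cast_ne_zero]
    exact Nat.lcm_ne_zero (by exact_mod_cast fun hh => he0 (by exact_mod_cast hh)) hd0
  have hgl : (Nat.gcd e d : ℚ) * (Nat.lcm e d : ℚ) = (e : ℚ) * (d : ℚ) := by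
    exact_mod_cast congrArg (Nat.cast : ℕ → ℚ) (Nat.gcd_mul_lcm e d)
  have hgc : (Nat.gcd d e : ℚ) = (Nat.gcd e d : ℚ) := by rw [Nat.gcd_comm]
  rw [hh, hgc]
  have hd0' : (d : ℚ) ≠ 0 := Nat.cast_ne_zero.mpr hd0
  field_simp
  linear_combination (sig n ρ e) * hgl

section GroupPart1

variable {G : Type*} [Group G] (H : Subgroup G) [H.Normal]

/-- number of commuting pairs lying over a given pair of cosets -/
noncomputable def Ncnt (s t : G ⧸ H) : ℕ :=
  Nat.card {p : G × G // p.1 * p.2 = p.2 * p.1 ∧ (p.1 : G ⧸ H) = s ∧ (p.2 : G ⧸ H) = t}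

lemma Ncnt_swap (s t : G ⧸ H) : Ncnt H s t = Ncnt H t s := by
  apply Nat.card_congr
  exact ⟨fun p => ⟨⟨p.1.2, p.1.1⟩, p.2.1.symm, p.2.2.2, p.2.2.1⟩,
         fun p => ⟨⟨p.1.2, p.1.1⟩, p.2.1.symm, p.2.2.2, p.2.2.1⟩,
         fun p => rfl, fun p => rfl⟩

lemma Ncnt_mul (s t : G ⧸ H) : Ncnt H s t = Ncnt H s (s * t) := by
  apply Nat.card_congr
  refine ⟨fun p => ⟨⟨p.1.1, p.1.1 * p.1.2⟩, ?_, ?_, ?_⟩,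
          fun p => ⟨⟨p.1.1, p.1.1⁻¹ * p.1.2⟩, ?_, ?_, ?_⟩, ?_, ?_⟩
  · exact ((Commute.refl p.1.1).mul_right p.2.1)
  · exact p.2.2.1
  · rw [QuotientGroup.mk_mul, p.2.2.1, p.2.2.2]
  · exact ((Commute.refl p.1.1).inv_right.mul_right p.2.1)
  · exact p.2.2.1
  · rw [QuotientGroup.mk_mul, QuotientGroup.mk_inv, p.2.2.1, p.2.2.2]
    group
  · intro p
    apply Subtype.ext
    simp
  · intro p
    apply Subtype.ext
    simp

lemma Ncnt_inv (s t : G ⧸ H) : Ncnt H s t = Ncnt H s t⁻¹ := by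
  apply Nat.card_congr
  refine ⟨fun p => ⟨⟨p.1.1, p.1.2⁻¹⟩, (Commute.inv_right p.2.1), p.2.2.1, ?_⟩,
          fun p => ⟨⟨p.1.1, p.1.2⁻¹⟩, (Commute.inv_right p.2.1), p.2.2.1, ?_⟩, ?_, ?_⟩
  · rw [QuotientGroup.mk_inv, p.2.2.2]
  · rw [QuotientGroup.mk_inv, p.2.2.2, inv_inv]
  · intro p; apply Subtype.ext; simp
  · intro p; apply Subtype.ext; simp

section comm
variable (hcomm : ∀ a b : G ⧸ H, a * b = b * a)
include hcomm

lemma Ncnt_mul_left (s t : G ⧸ H) : Ncnt H (s * t) t = Ncnt H s t := by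
  rw [Ncnt_swap, hcomm s t, ← Ncnt_mul, Ncnt_swap]

lemma Ncnt_mul_pow (k : ℕ) (s t : G ⧸ H) : Ncnt H (s * t ^ k) t = Ncnt H s t := by
  induction k with
  | zero => rw [pow_zero, mul_one]
  | succ k ih =>
    rw [pow_succ, ← mul_assoc, Ncnt_mul_left H hcomm, ih]

lemma Ncnt_euclid (w : G ⧸ H) : ∀ j i, Ncnt H (w ^ i) (w ^ j) = Ncnt H (w ^ Nat.gcd j i) 1 := by
  intro j
  induction j using Nat.strong_induction_on with
  | _ j IH =>
    intro i
    rcases Nat.eq_zero_or_pos j with rfl | hj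
    · rw [pow_zero, Nat.gcd_zero_left]
    · have hmod : w ^ i = w ^ (i % j) * (w ^ j) ^ (i / j) := by
        rw [← pow_mul, ← pow_add, Nat.mod_add_div i j]
      rw [hmod, Ncnt_mul_pow H hcomm, Ncnt_swap,
        IH (i % j) (Nat.mod_lt i hj) j, Nat.gcd_rec j i]
end comm

end GroupPart1

section GroupPart2


open Finset

variable {G : Type*} [Group G] [Finite G] (H : Subgroup G)

lemma fib [Fintype (G ⧸ H)] (p q : G ⧸ H → Prop) [DecidablePred p] [DecidablePred q] :
    Nat.card {pr : G × G // pr.1 * pr.2 = pr.2 * pr.1 ∧ p (pr.1 : G ⧸ H) ∧ q (pr.2 : G ⧸ H)}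
      = ∑ s : G ⧸ H, ∑ t : G ⧸ H, (if p s ∧ q t then Ncnt H s t else 0) := by
  classical
  haveI : Fintype G := Fintype.ofFinite G
  rw [Nat.card_eq_fintype_card, Fintype.card_subtype]
  rw [Finset.card_eq_sum_card_fiberwise
      (f := fun pr : G × G => ((pr.1 : G ⧸ H), (pr.2 : G ⧸ H)))
      (t := (Finset.univ : Finset ((G ⧸ H) × (G ⧸ H)))) (fun x _ => Finset.mem_univ _)]
  have key : ∀ st : (G ⧸ H) × (G ⧸ H),
      ((Finset.univ.filter
          (fun pr : G × G => pr.1 * pr.2 = pr.2 * pr.1 ∧ p ↑pr.1 ∧ q ↑pr.2)).filter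
        (fun pr : G × G => ((pr.1 : G ⧸ H), (pr.2 : G ⧸ H)) = st)).card
        = if p st.1 ∧ q st.2 then Ncnt H st.1 st.2 else 0 := by
    rintro ⟨s, t⟩
    rw [Finset.filter_filter]
    by_cases hpq : p s ∧ q t
    · rw [if_pos hpq]
      have : Ncnt H s t = (Finset.univ.filter
          (fun pr : G × G => pr.1 * pr.2 = pr.2 * pr.1 ∧ (pr.1 : G ⧸ H) = s ∧ (pr.2 : G ⧸ H) = t)).card := by
        rw [Ncnt, Nat.card_eq_fintype_card, Fintype.card_subtype]
      rw [this]
      congr 1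
      apply Finset.filter_congr
      intro pr _
      simp only [Prod.mk.injEq]
      constructor
      · rintro ⟨⟨h1, -, -⟩, h4, h5⟩; exact ⟨h1, h4, h5⟩
      · rintro ⟨h1, h4, h5⟩; exact ⟨⟨h1, h4 ▸ hpq.1, h5 ▸ hpq.2⟩, h4, h5⟩
    · rw [if_neg hpq, Finset.card_eq_zero, Finset.filter_eq_empty_iff]
      rintro pr -
      rintro ⟨⟨-, h2, h3⟩, h4⟩
      rw [Prod.mk.injEq] at h4
      exact hpq ⟨h4.1 ▸ h2, h4.2 ▸ h3⟩
  rw [Finset.sum_congr rfl (fun st _ => key st), ← Fintype.sum_prod_type']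

lemma sum_univ_pow {Q : Type*} [Group Q] [Fintype Q] {M : Type*} [AddCommMonoid M]
    (w : Q) (n : ℕ) (hw : orderOf w = n) (hcard : Fintype.card Q = n) (f : Q → M) :
    ∑ s : Q, f s = ∑ i ∈ Finset.range n, f (w ^ i) := by
  classical
  have himg : (Finset.range n).image (fun i => w ^ i) = Finset.univ := by
    apply Finset.eq_univ_of_card
    rw [Finset.card_image_of_injOn, Finset.card_range, hcard]
    intro a ha b hb hab
    exact pow_injOn_Iio_orderOf (by simpa [hw] using Finset.mem_range.mp ha)
      (by simpa [hw] using Finset.mem_range.mp hb) hab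
  rw [← himg, Finset.sum_image]
  intro a ha b hb hab
  exact pow_injOn_Iio_orderOf (by simpa [hw] using Finset.mem_range.mp ha)
    (by simpa [hw] using Finset.mem_range.mp hb) hab

end GroupPart2

section GroupPart3

open Finset

variable {G : Type*} [Group G] [Finite G] (H : Subgroup G) [H.Normal]

-- cardinality of the image of K in G/H
lemma card_map_mk' (K : Subgroup G) (hle : H ≤ K) :
    Nat.card (K.map (QuotientGroup.mk' H)) = H.relIndex K := by
  set φ := (QuotientGroup.mk' H).comp K.subtype with hφ
  have hrange : φ.range = K.map (QuotientGroup.mk' H) := by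
    rw [hφ, MonoidHom.range_comp, Subgroup.range_subtype]
  have hker : φ.ker = H.subgroupOf K := by
    rw [hφ, ← MonoidHom.comap_ker, QuotientGroup.ker_mk']
    rfl
  have := (QuotientGroup.quotientKerEquivRange φ).toEquiv
  rw [hker, hrange] at this
  rw [← Nat.card_congr this]
  rfl

-- membership transfer
lemma mem_iff_mk_mem (K : Subgroup G) (hle : H ≤ K) (x : G) :
    x ∈ K ↔ (x : G ⧸ H) ∈ K.map (QuotientGroup.mk' H) := by
  constructor
  · intro hx
    exact ⟨x, hx, rfl⟩
  · intro hx
    have hcm : (K.map (QuotientGroup.mk' H)).comap (QuotientGroup.mk' H) = K :=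
      Subgroup.comap_map_eq_self (by rw [QuotientGroup.ker_mk']; exact hle)
    rw [← hcm]
    exact hx

-- subgroup of a cyclic group of order n: membership test by power
lemma mem_subgroup_cyclic {Q : Type*} [Group Q] [Fintype Q] (hcyc : IsCyclic Q)
    (Z : Subgroup Q) (b : ℕ) (hb : b ≠ 0) (hcard : Nat.card Z = b) (x : Q) :
    x ∈ Z ↔ x ^ b = 1 := by
  classical
  haveI := hcyc
  have hsub : (Finset.univ.filter (fun y : Q => y ∈ Z)) ⊆
      (Finset.univ.filter (fun y : Q => y ^ b = 1)) := by
    intro y hy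
    simp only [Finset.mem_filter, Finset.mem_univ, true_and] at hy ⊢
    have : (⟨y, hy⟩ : Z) ^ b = 1 := by
      rw [← hcard]
      exact pow_card_eq_one'
    have h2 := congrArg (Subtype.val) this
    rw [Subgroup.coe_pow] at h2
    exact h2
  have hcard1 : (Finset.univ.filter (fun y : Q => y ∈ Z)).card = b := by
    rw [← hcard]
    rw [Nat.card_eq_fintype_card, Fintype.card_subtype]
  have hcard2 : (Finset.univ.filter (fun y : Q => y ^ b = 1)).card ≤ b := by
    have := IsCyclic.card_pow_eq_one_le (α := Q) (n := b) (Nat.pos_of_ne_zero hb)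
    simpa using this
  have heq : (Finset.univ.filter (fun y : Q => y ∈ Z)) =
      (Finset.univ.filter (fun y : Q => y ^ b = 1)) :=
    Finset.eq_of_subset_of_card_le hsub (by omega)
  constructor
  · intro h
    have : x ∈ Finset.univ.filter (fun y : Q => y ^ b = 1) := by
      rw [← heq]; simp [h]
    simpa using this
  · intro h
    have : x ∈ Finset.univ.filter (fun y : Q => y ∈ Z) := by
      rw [heq]; simp [h]
    simpa using this

-- power membership test
lemma pow_mem_iff_dvd {Q : Type*} [Group Q] (w : Q) (n : ℕ) (hn : n ≠ 0)
    (hw : orderOf w = n) (b : ℕ) (hb : b ∣ n) (hb0 : b ≠ 0) (i : ℕ) :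
    (w ^ i) ^ b = 1 ↔ n / b ∣ i := by
  rw [← pow_mul, ← orderOf_dvd_iff_pow_eq_one, hw]
  constructor
  · intro h
    have h2 : (n / b) * b ∣ i * b := by rwa [Nat.div_mul_cancel hb]
    exact (Nat.mul_dvd_mul_iff_right (Nat.pos_of_ne_zero hb0)).mp h2
  · intro h
    have h2 : (n / b) * b ∣ i * b := Nat.mul_dvd_mul_right h b
    rwa [Nat.div_mul_cancel hb] at h2

end GroupPart3

section GroupPart4

open Finset MulAction

variable {G : Type*} [Group G] [Finite G]

lemma burnside_pairs (K : Subgroup G) [K.Normal] :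
    Nat.card {C : ConjClasses G // C.carrier ⊆ (K : Set G)} * Nat.card G
      = Nat.card {pr : G × G // pr.1 * pr.2 = pr.2 * pr.1 ∧ pr.1 ∈ K} := by
  classical
  haveI : Fintype G := Fintype.ofFinite G
  haveI : Fintype (ConjAct G) := Fintype.ofFinite _
  haveI : Fintype ↥K := Fintype.ofFinite _
  haveI : Fintype (Quotient (orbitRel (ConjAct G) ↥K)) := Fintype.ofFinite _
  haveI : ∀ a : ConjAct G, Fintype (fixedBy ↥K a) := fun a => Fintype.ofFinite _
  -- equivalence between the orbit quotient and conjugacy classes inside K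
  have wd : ∀ (a b : ↥K), (orbitRel (ConjAct G) ↥K).r a b →
      ConjClasses.mk (a : G) = ConjClasses.mk (b : G) := by
    intro a b hab
    obtain ⟨g, hg⟩ := hab
    rw [ConjClasses.mk_eq_mk_iff_isConj, isConj_iff]
    refine ⟨(ConjAct.ofConjAct g)⁻¹, ?_⟩
    have := congrArg Subtype.val hg
    rw [ConjAct.Subgroup.val_conj_smul, ConjAct.smul_def] at this
    rw [← this]
    group
  have hcar : ∀ x : ↥K, (ConjClasses.mk (x : G)).carrier ⊆ (K : Set G) := by
    intro x y hy
    rw [ConjClasses.mem_carrier_iff_mk_eq, ConjClasses.mk_eq_mk_iff_isConj] at hy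
    obtain ⟨c, hc⟩ := isConj_iff.mp hy.symm
    rw [← hc]
    exact ‹K.Normal›.conj_mem _ x.2 c
  let f : Quotient (orbitRel (ConjAct G) ↥K) → {C : ConjClasses G // C.carrier ⊆ (K : Set G)} :=
    Quotient.lift (fun x : ↥K => ⟨ConjClasses.mk (x : G), hcar x⟩)
      (fun a b hab => Subtype.ext (wd a b hab))
  have hinj : Function.Injective f := by
    intro a b
    induction a using Quotient.inductionOn with | _ x =>
    induction b using Quotient.inductionOn with | _ y =>
    intro hxy
    simp only [f, Quotient.lift_mk, Subtype.mk.injEq] at hxy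
    rw [ConjClasses.mk_eq_mk_iff_isConj] at hxy
    obtain ⟨c, hc⟩ := isConj_iff.mp hxy
    apply Quotient.sound
    refine ⟨ConjAct.toConjAct c⁻¹, ?_⟩
    apply Subtype.ext
    rw [ConjAct.Subgroup.val_conj_smul, ConjAct.smul_def, ConjAct.ofConjAct_toConjAct]
    rw [← hc]
    group
  have hsurj : Function.Surjective f := by
    rintro ⟨C, hC⟩
    obtain ⟨y, rfl⟩ := ConjClasses.mk_surjective C
    have hy : y ∈ K := hC (ConjClasses.mem_carrier_iff_mk_eq.mpr rfl)
    exact ⟨Quotient.mk _ ⟨y, hy⟩, rfl⟩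
  have e1 : Nat.card (Quotient (orbitRel (ConjAct G) ↥K))
      = Nat.card {C : ConjClasses G // C.carrier ⊆ (K : Set G)} :=
    Nat.card_congr (Equiv.ofBijective f ⟨hinj, hsurj⟩)
  -- equivalence between commuting pairs (with first in K) and Σ of fixed points
  have e2 : {pr : G × G // pr.1 * pr.2 = pr.2 * pr.1 ∧ pr.1 ∈ K}
      ≃ Σ a : ConjAct G, (fixedBy ↥K a) := by
    refine ⟨fun p => ⟨ConjAct.toConjAct p.1.2, ⟨⟨p.1.1, p.2.2⟩, ?_⟩⟩,
            fun q => ⟨⟨(q.2.1 : G), ConjAct.ofConjAct q.1⟩, ?_, (q.2.1).2⟩, ?_, ?_⟩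
    · rw [MulAction.mem_fixedBy]
      apply Subtype.ext
      rw [ConjAct.Subgroup.val_conj_smul, ConjAct.smul_def, ConjAct.ofConjAct_toConjAct]
      rw [mul_inv_eq_iff_eq_mul]
      exact p.2.1.symm
    · have hq := q.2.2
      rw [MulAction.mem_fixedBy] at hq
      have := congrArg Subtype.val hq
      rw [ConjAct.Subgroup.val_conj_smul, ConjAct.smul_def] at this
      rw [mul_inv_eq_iff_eq_mul] at this
      exact this.symm
    · intro p; apply Subtype.ext; rfl
    · rintro ⟨a, z, hz⟩; rfl
  rw [Nat.card_congr e2]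
  have hG : Nat.card G = Nat.card (ConjAct G) := Nat.card_congr ConjAct.toConjAct.toEquiv
  rw [← e1, hG]
  simp only [Nat.card_eq_fintype_card]
  rw [Fintype.card_sigma]
  exact (MulAction.sum_card_fixedBy_eq_card_orbits_mul_card_group (ConjAct G) ↥K).symm

end GroupPart4
/-- `S*_d = n·∑_{c|n} ∑_{a|c} ∑_{b|c} (μ(c/a)μ(c/b)/φ(c))·(gcd(a,d)/lcm(a,d))·S_b`,
where `S*_d` is the number of conjugacy classes of `K d` under its own action and
`S b` is the number of `G`-conjugacy classes contained in `K b`. -/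
theorem stmt17 {G : Type*} [Group G] [Finite G] (H : Subgroup G) [H.Normal]
    (hcyc : IsCyclic (G ⧸ H)) (n : ℕ) (hn : Nat.card (G ⧸ H) = n)
    (K : ℕ → Subgroup G) (hK : ∀ d, d ∣ n → H ≤ K d ∧ H.relIndex (K d) = d)
    (S : ℕ → ℕ)
    (hS : ∀ b, b ∣ n →
      Nat.card {C : ConjClasses G // C.carrier ⊆ (K b : Set G)} = S b)
    (d : ℕ) (hd : d ∣ n) :
    (Nat.card (ConjClasses (K d)) : ℚ) =
      (n : ℚ) * ∑ c ∈ n.divisors, ∑ a ∈ c.divisors, ∑ b ∈ c.divisors,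
        ((ArithmeticFunction.moebius (c / a) : ℚ) *
            (ArithmeticFunction.moebius (c / b) : ℚ) / (Nat.totient c : ℚ)) *
          ((Nat.gcd a d : ℚ) / (Nat.lcm a d : ℚ)) * (S b : ℚ) := by
  classical
  haveI : Fintype G := Fintype.ofFinite G
  haveI hcycI : IsCyclic (G ⧸ H) := hcyc
  haveI : Fintype (G ⧸ H) := Fintype.ofFinite _
  have hn0 : n ≠ 0 := by rw [← hn]; exact Nat.card_pos.ne'
  have hd0 : d ≠ 0 := by rintro rfl; exact hn0 (zero_dvd_iff.mp hd)
  have hn' : (n : ℚ) ≠ 0 := Nat.cast_ne_zero.mpr hn0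
  obtain ⟨w, hwgen⟩ := IsCyclic.exists_generator (α := G ⧸ H)
  have hword : orderOf w = n := by
    rw [orderOf_eq_card_of_forall_mem_zpowers hwgen, hn]
  have hcardQ : Fintype.card (G ⧸ H) = n := by rw [← Nat.card_eq_fintype_card, hn]
  have hcomm : ∀ a b : G ⧸ H, a * b = b * a := by
    intro a b
    obtain ⟨i, rfl⟩ := Subgroup.mem_zpowers_iff.mp (hwgen a)
    obtain ⟨j, rfl⟩ := Subgroup.mem_zpowers_iff.mp (hwgen b)
    rw [← zpow_add, ← zpow_add, add_comm]
  have hH0 : (Nat.card H : ℚ) ≠ 0 := Nat.cast_ne_zero.mpr Nat.card_pos.ne'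
  set ρ : ℕ → ℚ := fun l => (Ncnt H (w ^ (n / l)) 1 : ℚ) / (Nat.card H : ℚ) with hρ
  have hrho : ∀ i j : ℕ, (Ncnt H (w ^ i) (w ^ j) : ℚ)
      = (Nat.card H : ℚ) * ρ (n / Nat.gcd n (Nat.gcd i j)) := by
    intro i j
    have h2 : Ncnt H (w ^ Nat.gcd j i) 1 = Ncnt H (w ^ Nat.gcd n (Nat.gcd j i)) 1 := by
      have hw1 : Ncnt H (w ^ Nat.gcd j i) ((1 : G ⧸ H))
          = Ncnt H (w ^ Nat.gcd j i) (w ^ n) := by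
        rw [← hword, pow_orderOf_eq_one]
      rw [hw1, Ncnt_euclid H hcomm w n (Nat.gcd j i)]
    have h1 : Ncnt H (w ^ i) (w ^ j) = Ncnt H (w ^ (Nat.gcd n (Nat.gcd i j))) 1 := by
      rw [Ncnt_euclid H hcomm w j i, h2, Nat.gcd_comm j i]
    rw [h1, hρ]
    have hg : Nat.gcd n (Nat.gcd i j) ∣ n := Nat.gcd_dvd_left _ _
    simp only []
    rw [Nat.div_div_self hg hn0]
    field_simp
  -- membership in terms of exponents
  have hsub : ∀ b, b ∣ n → ∀ i : ℕ,
      ((w ^ i : G ⧸ H) ∈ (K b).map (QuotientGroup.mk' H)) ↔ (n / b ∣ i) := by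
    intro b hb i
    have hb0 : b ≠ 0 := by rintro rfl; exact hn0 (zero_dvd_iff.mp hb)
    have hcardZ : Nat.card ((K b).map (QuotientGroup.mk' H)) = b := by
      rw [card_map_mk' H (K b) (hK b hb).1, (hK b hb).2]
    rw [mem_subgroup_cyclic hcycI _ b hb0 hcardZ,
      pow_mem_iff_dvd w n hn0 hword b hb hb0 i]
  have hcardG : Nat.card G = Nat.card H * n := by
    rw [← Subgroup.card_mul_index H, Subgroup.index_eq_card, hn]
  -- normality of each K b
  have hnormal : ∀ b, b ∣ n → (K b).Normal := by
    intro b hb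
    have hZn : ((K b).map (QuotientGroup.mk' H)).Normal := by
      constructor
      intro z hz g
      have : g * z * g⁻¹ = z := by rw [hcomm g z, mul_inv_cancel_right]
      rw [this]; exact hz
    have hcm : ((K b).map (QuotientGroup.mk' H)).comap (QuotientGroup.mk' H) = K b :=
      Subgroup.comap_map_eq_self (by rw [QuotientGroup.ker_mk']; exact (hK b hb).1)
    rw [← hcm]
    exact Subgroup.Normal.comap hZn _
  -- the GB identity
  have hGB : ∀ b, b ∣ n → (S b : ℚ) = (1 / (n : ℚ)) *
      ∑ i ∈ Finset.range n, ∑ j ∈ Finset.range n,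
        (if n / b ∣ i then ρ (n / Nat.gcd n (Nat.gcd i j)) else 0) := by
    intro b hb
    haveI hKn : (K b).Normal := hnormal b hb
    have hburn := burnside_pairs (K b)
    have hpairs_eq : Nat.card {pr : G × G // pr.1 * pr.2 = pr.2 * pr.1 ∧ pr.1 ∈ K b}
        = Nat.card {pr : G × G // pr.1 * pr.2 = pr.2 * pr.1 ∧
            ((pr.1 : G ⧸ H) ∈ (K b).map (QuotientGroup.mk' H)) ∧
            (fun _ : G ⧸ H => True) (pr.2 : G ⧸ H)} := by
      apply Nat.card_congr
      apply Equiv.subtypeEquivRight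
      intro pr
      rw [mem_iff_mk_mem H (K b) (hK b hb).1 pr.1]
      tauto
    have hfib := fib H (fun s => s ∈ (K b).map (QuotientGroup.mk' H))
      (fun _ : G ⧸ H => True)
    have hre1 := sum_univ_pow w n hword hcardQ
      (fun s => ∑ t : G ⧸ H,
        (if s ∈ (K b).map (QuotientGroup.mk' H) ∧ True then Ncnt H s t else 0))
    have hre2 : ∀ i ∈ Finset.range n,
        (∑ t : G ⧸ H,
          (if (w ^ i : G ⧸ H) ∈ (K b).map (QuotientGroup.mk' H) ∧ True
            then Ncnt H (w ^ i) t else 0))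
        = ∑ j ∈ Finset.range n,
          (if (w ^ i : G ⧸ H) ∈ (K b).map (QuotientGroup.mk' H) ∧ True
            then Ncnt H (w ^ i) (w ^ j) else 0) := by
      intro i _
      exact sum_univ_pow w n hword hcardQ _
    have htot : Nat.card {C : ConjClasses G // C.carrier ⊆ (K b : Set G)} * Nat.card G
        = ∑ i ∈ Finset.range n, ∑ j ∈ Finset.range n,
          (if (w ^ i : G ⧸ H) ∈ (K b).map (QuotientGroup.mk' H) ∧ True
            then Ncnt H (w ^ i) (w ^ j) else 0) :=
      hburn.trans (hpairs_eq.trans (hfib.trans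
        (hre1.trans (Finset.sum_congr rfl hre2))))
    rw [hS b hb, hcardG] at htot
    have hcast : ((∑ i ∈ Finset.range n, ∑ j ∈ Finset.range n,
        (if (w ^ i : G ⧸ H) ∈ (K b).map (QuotientGroup.mk' H) ∧ True
          then Ncnt H (w ^ i) (w ^ j) else 0) : ℕ) : ℚ)
        = (Nat.card H : ℚ) * ∑ i ∈ Finset.range n, ∑ j ∈ Finset.range n,
          (if n / b ∣ i then ρ (n / Nat.gcd n (Nat.gcd i j)) else 0) := by
      push_cast
      rw [Finset.mul_sum]
      apply Finset.sum_congr rfl; intro i _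
      rw [Finset.mul_sum]
      apply Finset.sum_congr rfl; intro j _
      by_cases hc : n / b ∣ i
      · rw [if_pos ⟨(hsub b hb i).mpr hc, trivial⟩, if_pos hc, hrho i j]
      · rw [if_neg (fun hh => hc ((hsub b hb i).mp hh.1)), if_neg hc, mul_zero]
    have final : (S b : ℚ) * ((Nat.card H : ℚ) * (n : ℚ))
        = (Nat.card H : ℚ) * ∑ i ∈ Finset.range n, ∑ j ∈ Finset.range n,
          (if n / b ∣ i then ρ (n / Nat.gcd n (Nat.gcd i j)) else 0) := by
      rw [← hcast]
      exact_mod_cast congrArg (fun x : ℕ => (x : ℚ)) htot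
    have h2 : (S b : ℚ) * (n : ℚ) = ∑ i ∈ Finset.range n, ∑ j ∈ Finset.range n,
        (if n / b ∣ i then ρ (n / Nat.gcd n (Nat.gcd i j)) else 0) :=
      mul_left_cancel₀ hH0 (by linear_combination final)
    rw [← h2]
    field_simp
  -- the GA identity
  have hGA : (Nat.card (ConjClasses ↥(K d)) : ℚ) = (1 / (d : ℚ)) *
      ∑ i ∈ Finset.range n, ∑ j ∈ Finset.range n,
        (if n / d ∣ i ∧ n / d ∣ j then ρ (n / Nat.gcd n (Nat.gcd i j)) else 0) := by
    haveI hKn : (K d).Normal := hnormal d hd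
    have hcardK : Nat.card ↥(K d) = Nat.card H * d := by
      have h1 := Subgroup.card_mul_index (H.subgroupOf (K d))
      rw [show (H.subgroupOf (K d)).index = d from (hK d hd).2] at h1
      rw [Nat.card_congr (Subgroup.subgroupOfEquivOfLe (hK d hd).1).toEquiv] at h1
      exact h1.symm
    have hcc := card_comm_eq_card_conjClasses_mul_card ↥(K d)
    have heqv : Nat.card {p : ↥(K d) × ↥(K d) // Commute p.1 p.2}
        = Nat.card {pr : G × G // pr.1 * pr.2 = pr.2 * pr.1 ∧
            ((pr.1 : G ⧸ H) ∈ (K d).map (QuotientGroup.mk' H)) ∧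
            ((pr.2 : G ⧸ H) ∈ (K d).map (QuotientGroup.mk' H))} := by
      apply Nat.card_congr
      refine Equiv.trans
        (⟨fun p => ⟨((p.1.1 : G), (p.1.2 : G)), ?_, p.1.1.2, p.1.2.2⟩,
          fun q => ⟨(⟨q.1.1, q.2.2.1⟩, ⟨q.1.2, q.2.2.2⟩), ?_⟩, ?_, ?_⟩ :
          {p : ↥(K d) × ↥(K d) // Commute p.1 p.2}
            ≃ {pr : G × G // pr.1 * pr.2 = pr.2 * pr.1 ∧ pr.1 ∈ K d ∧ pr.2 ∈ K d})
        (Equiv.subtypeEquivRight ?_)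
      · exact congrArg Subtype.val p.2
      · exact Subtype.ext q.2.1
      · intro p; apply Subtype.ext; rfl
      · intro q; apply Subtype.ext; rfl
      · intro pr
        rw [mem_iff_mk_mem H (K d) (hK d hd).1 pr.1,
          mem_iff_mk_mem H (K d) (hK d hd).1 pr.2]
    have hfib := fib H (fun s => s ∈ (K d).map (QuotientGroup.mk' H))
      (fun s => s ∈ (K d).map (QuotientGroup.mk' H))
    have hre1 := sum_univ_pow w n hword hcardQ
      (fun s => ∑ t : G ⧸ H,
        (if s ∈ (K d).map (QuotientGroup.mk' H) ∧ t ∈ (K d).map (QuotientGroup.mk' H)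
          then Ncnt H s t else 0))
    have hre2 : ∀ i ∈ Finset.range n,
        (∑ t : G ⧸ H,
          (if (w ^ i : G ⧸ H) ∈ (K d).map (QuotientGroup.mk' H)
              ∧ t ∈ (K d).map (QuotientGroup.mk' H)
            then Ncnt H (w ^ i) t else 0))
        = ∑ j ∈ Finset.range n,
          (if (w ^ i : G ⧸ H) ∈ (K d).map (QuotientGroup.mk' H)
              ∧ (w ^ j : G ⧸ H) ∈ (K d).map (QuotientGroup.mk' H)
            then Ncnt H (w ^ i) (w ^ j) else 0) := by
      intro i _
      exact sum_univ_pow w n hword hcardQ _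
    have htot : Nat.card (ConjClasses ↥(K d)) * Nat.card ↥(K d)
        = ∑ i ∈ Finset.range n, ∑ j ∈ Finset.range n,
          (if (w ^ i : G ⧸ H) ∈ (K d).map (QuotientGroup.mk' H)
              ∧ (w ^ j : G ⧸ H) ∈ (K d).map (QuotientGroup.mk' H)
            then Ncnt H (w ^ i) (w ^ j) else 0) :=
      hcc.symm.trans (heqv.trans (hfib.trans
        (hre1.trans (Finset.sum_congr rfl hre2))))
    rw [hcardK] at htot
    have hcast : ((∑ i ∈ Finset.range n, ∑ j ∈ Finset.range n,
        (if (w ^ i : G ⧸ H) ∈ (K d).map (QuotientGroup.mk' H)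
            ∧ (w ^ j : G ⧸ H) ∈ (K d).map (QuotientGroup.mk' H)
          then Ncnt H (w ^ i) (w ^ j) else 0) : ℕ) : ℚ)
        = (Nat.card H : ℚ) * ∑ i ∈ Finset.range n, ∑ j ∈ Finset.range n,
          (if n / d ∣ i ∧ n / d ∣ j then ρ (n / Nat.gcd n (Nat.gcd i j)) else 0) := by
      push_cast
      rw [Finset.mul_sum]
      apply Finset.sum_congr rfl; intro i _
      rw [Finset.mul_sum]
      apply Finset.sum_congr rfl; intro j _
      by_cases hc1 : n / d ∣ i <;> by_cases hc2 : n / d ∣ j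
      · rw [if_pos ⟨(hsub d hd i).mpr hc1, (hsub d hd j).mpr hc2⟩,
          if_pos ⟨hc1, hc2⟩, hrho i j]
      all_goals
        rw [if_neg, if_neg, mul_zero]
        · tauto
        · rintro ⟨ha, hb'⟩
          exact (by tauto : ¬(n / d ∣ i ∧ n / d ∣ j))
            ⟨(hsub d hd i).mp ha, (hsub d hd j).mp hb'⟩
    have final : (Nat.card (ConjClasses ↥(K d)) : ℚ) * ((Nat.card H : ℚ) * (d : ℚ))
        = (Nat.card H : ℚ) * ∑ i ∈ Finset.range n, ∑ j ∈ Finset.range n,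
          (if n / d ∣ i ∧ n / d ∣ j then ρ (n / Nat.gcd n (Nat.gcd i j)) else 0) := by
      rw [← hcast]
      exact_mod_cast congrArg (fun x : ℕ => (x : ℚ)) htot
    have h2 : (Nat.card (ConjClasses ↥(K d)) : ℚ) * (d : ℚ)
        = ∑ i ∈ Finset.range n, ∑ j ∈ Finset.range n,
          (if n / d ∣ i ∧ n / d ∣ j then ρ (n / Nat.gcd n (Nat.gcd i j)) else 0) :=
      mul_left_cancel₀ hH0 (by linear_combination final)
    have hd' : (d : ℚ) ≠ 0 := Nat.cast_ne_zero.mpr hd0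
    rw [← h2]
    field_simp
  -- final assembly
  rw [hGA, AR n d hn0 hd ρ]
  apply congrArg
  apply Finset.sum_congr rfl; intro c hc
  apply Finset.sum_congr rfl; intro a _
  apply Finset.sum_congr rfl; intro b hb
  have hbn : b ∣ n := (Nat.mem_divisors.mp hb).1.trans (Nat.mem_divisors.mp hc).1
  rw [hGB b hbn]
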